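/- arXiv:2503.07324 — 3 statements merged into one kernel-verified Lean document; each statement's English description precedes it below -/
import Mathlib

section
/- Let (a_k)_{k∈ℕ} be a nonnegative real sequence satisfying a_{k+1} ≤ c·a_k + b_k for all k, where c ∈ (0,1) and b_k ≥ 0. Then for every T ≥ 1, the sum ∑_{k=0}^{T−1} a_k² ≤ (2/(1−c²))·( a_0² + ((1+c²)/(1−c²))·∑_{k=0}^{T−1} b_k² ). -/
/-- For a nonnegative sequence with a_{k+1} ≤ c·a_k + b_k, c ∈ (0,1), b_k ≥ 0, and T ≥ 1:
∑_{k=0}^{T−1} a_k² ≤ (2/(1−c²))·(a_0² + ((1+c²)/(1−c²))·∑_{k=0}^{T−1} b_k²). -/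
theorem stmt2 (c : ℝ) (hc0 : 0 < c) (hc1 : c < 1) (a b : ℕ → ℝ)
    (ha : ∀ k, 0 ≤ a k) (hb : ∀ k, 0 ≤ b k)
    (hrec : ∀ k, a (k + 1) ≤ c * a k + b k) (T : ℕ) (hT : 1 ≤ T) :
    ∑ k ∈ Finset.range T, a k ^ 2 ≤
      2 / (1 - c ^ 2) *
        (a 0 ^ 2 + (1 + c ^ 2) / (1 - c ^ 2) * ∑ k ∈ Finset.range T, b k ^ 2) := by
  have h1c : 0 < 1 - c ^ 2 := by nlinarith
  -- key step inequality
  have hstep : ∀ k, a (k + 1) ^ 2 ≤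
      (1 + c ^ 2) / 2 * a k ^ 2 + (1 + c ^ 2) / (1 - c ^ 2) * b k ^ 2 := by
    intro k
    have h1 : a (k + 1) ^ 2 ≤ (c * a k + b k) ^ 2 := by
      have := hrec k
      nlinarith [ha (k + 1)]
    have h2 : (1 - c ^ 2) * (c * a k + b k) ^ 2 ≤
        (1 - c ^ 2) * ((1 + c ^ 2) / 2 * a k ^ 2) + (1 + c ^ 2) * b k ^ 2 := by
      nlinarith [sq_nonneg ((1 - c ^ 2) * a k - 2 * c * b k)]
    have h3 : (c * a k + b k) ^ 2 ≤
        (1 + c ^ 2) / 2 * a k ^ 2 + (1 + c ^ 2) / (1 - c ^ 2) * b k ^ 2 := by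
      rw [← sub_nonneg]
      have : (1 + c ^ 2) / 2 * a k ^ 2 + (1 + c ^ 2) / (1 - c ^ 2) * b k ^ 2
          - (c * a k + b k) ^ 2
          = ((1 - c ^ 2) * ((1 + c ^ 2) / 2 * a k ^ 2) + (1 + c ^ 2) * b k ^ 2
            - (1 - c ^ 2) * (c * a k + b k) ^ 2) / (1 - c ^ 2) := by
        field_simp
      rw [this]
      apply div_nonneg _ (le_of_lt h1c)
      linarith
    linarith
  obtain ⟨n, rfl⟩ : ∃ n, T = n + 1 := ⟨T - 1, (Nat.succ_pred_eq_of_pos hT).symm⟩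
  set S := ∑ k ∈ Finset.range (n + 1), a k ^ 2 with hS
  set B := ∑ k ∈ Finset.range (n + 1), b k ^ 2 with hB
  have hSsplit : S = (∑ k ∈ Finset.range n, a (k + 1) ^ 2) + a 0 ^ 2 :=
    Finset.sum_range_succ' _ n
  have hbound : (∑ k ∈ Finset.range n, a (k + 1) ^ 2) ≤
      (1 + c ^ 2) / 2 * (∑ k ∈ Finset.range n, a k ^ 2)
        + (1 + c ^ 2) / (1 - c ^ 2) * (∑ k ∈ Finset.range n, b k ^ 2) := by
    rw [Finset.mul_sum, Finset.mul_sum, ← Finset.sum_add_distrib]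
    exact Finset.sum_le_sum fun k _ => hstep k
  have haS : (∑ k ∈ Finset.range n, a k ^ 2) ≤ S := by
    rw [hS, Finset.sum_range_succ]
    nlinarith [sq_nonneg (a n)]
  have hbB : (∑ k ∈ Finset.range n, b k ^ 2) ≤ B := by
    rw [hB, Finset.sum_range_succ]
    nlinarith [sq_nonneg (b n)]
  have hC : 0 ≤ (1 + c ^ 2) / 2 := by positivity
  have hC2 : 0 ≤ (1 + c ^ 2) / (1 - c ^ 2) := by positivity
  have hmain : S ≤ a 0 ^ 2 + (1 + c ^ 2) / 2 * S + (1 + c ^ 2) / (1 - c ^ 2) * B := by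
    have := mul_le_mul_of_nonneg_left haS hC
    have := mul_le_mul_of_nonneg_left hbB hC2
    linarith [hbound]
  rw [div_mul_eq_mul_div, le_div_iff₀ h1c]
  nlinarith [hmain]
end

section
/- Let v_1, v_2 be nonzero vectors in R^m forming an acute angle θ_{12} ∈ (0, π/2), and let v_3 = λ_1 v_1 + λ_2 v_2 with λ_1, λ_2 ≥ 0 and v_3 ≠ 0. Then the angle θ_{23} between v_3 and v_2 satisfies θ_{23} ≤ θ_{12}; moreover if λ_1 > 0 and λ_2 > 0 then θ_{23} < θ_{12}. -/
open InnerProductGeometry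

/-- Conic combinations decrease the angle: if v₁, v₂ form an acute angle θ₁₂ ∈ (0, π/2) and
v₃ = λ₁v₁ + λ₂v₂ with λ₁, λ₂ ≥ 0 and v₃ ≠ 0, then the angle between v₃ and v₂ is ≤ θ₁₂,
strictly so when λ₁, λ₂ > 0. -/
theorem stmt10 {m : ℕ} (v1 v2 : EuclideanSpace ℝ (Fin m))
    (hv1 : v1 ≠ 0) (hv2 : v2 ≠ 0)
    (hacute0 : 0 < angle v1 v2) (hacute1 : angle v1 v2 < Real.pi / 2)
    (l1 l2 : ℝ) (hl1 : 0 ≤ l1) (hl2 : 0 ≤ l2)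
    (hv3 : l1 • v1 + l2 • v2 ≠ 0) :
    angle (l1 • v1 + l2 • v2) v2 ≤ angle v1 v2 ∧
    (0 < l1 → 0 < l2 → angle (l1 • v1 + l2 • v2) v2 < angle v1 v2) := by
  set v3 := l1 • v1 + l2 • v2 with hv3def
  have a1 : (0:ℝ) < ‖v1‖ := norm_pos_iff.mpr hv1
  have a2 : (0:ℝ) < ‖v2‖ := norm_pos_iff.mpr hv2
  have a3 : (0:ℝ) < ‖v3‖ := norm_pos_iff.mpr hv3
  have hmem12 : angle v1 v2 ∈ Set.Icc 0 Real.pi := ⟨angle_nonneg _ _, angle_le_pi _ _⟩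
  have hmem32 : angle v3 v2 ∈ Set.Icc 0 Real.pi := ⟨angle_nonneg _ _, angle_le_pi _ _⟩
  -- cos(angle v1 v2) ∈ (0,1)
  have hcpos : 0 < Real.cos (angle v1 v2) := by
    apply Real.cos_pos_of_mem_Ioo
    constructor
    · linarith [Real.pi_pos]
    · exact hacute1
  have hclt1 : Real.cos (angle v1 v2) < 1 := by
    have := Real.strictAntiOn_cos ⟨le_refl 0, Real.pi_pos.le⟩ hmem12 hacute0
    simpa using this
  have hip12 : (inner ℝ v1 v2 : ℝ) = Real.cos (angle v1 v2) * (‖v1‖ * ‖v2‖) :=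
    (div_eq_iff (by positivity)).mp (cos_angle v1 v2).symm
  have hppos : (0:ℝ) < inner ℝ v1 v2 := by
    rw [hip12]; positivity
  have hplt : (inner ℝ v1 v2 : ℝ) < ‖v1‖ * ‖v2‖ := by
    rw [hip12]
    nlinarith
  have hip32 : (inner ℝ v3 v2 : ℝ) = l1 * inner ℝ v1 v2 + l2 * (‖v2‖ * ‖v2‖) := by
    rw [hv3def, inner_add_left, real_inner_smul_left, real_inner_smul_left,
      real_inner_self_eq_norm_mul_norm]
  have hn3 : ‖v3‖ ≤ l1 * ‖v1‖ + l2 * ‖v2‖ := by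
    calc ‖v3‖ ≤ ‖l1 • v1‖ + ‖l2 • v2‖ := norm_add_le _ _
    _ = l1 * ‖v1‖ + l2 * ‖v2‖ := by
        rw [norm_smul, norm_smul, Real.norm_eq_abs, Real.norm_eq_abs,
          abs_of_nonneg hl1, abs_of_nonneg hl2]
  -- key cross-multiplied inequality
  have key : ∀ (strict : Bool), (strict = true → 0 < l2) →
      (if strict then
        (inner ℝ v1 v2 : ℝ) * (‖v3‖ * ‖v2‖) < (inner ℝ v3 v2 : ℝ) * (‖v1‖ * ‖v2‖)
      else (inner ℝ v1 v2 : ℝ) * (‖v3‖ * ‖v2‖) ≤ (inner ℝ v3 v2 : ℝ) * (‖v1‖ * ‖v2‖)) := by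
    intro strict hs
    have h1 : (inner ℝ v1 v2 : ℝ) * (‖v3‖ * ‖v2‖) ≤
        (inner ℝ v1 v2 : ℝ) * ((l1 * ‖v1‖ + l2 * ‖v2‖) * ‖v2‖) := by
      have := mul_le_mul_of_nonneg_left (mul_le_mul_of_nonneg_right hn3 a2.le) hppos.le
      linarith
    cases strict with
    | false =>
      rw [if_neg (by simp)]
      rw [hip32]
      nlinarith [mul_le_mul_of_nonneg_left hplt.le (mul_nonneg hl2 a2.le)]
    | true =>
      have hl2' := hs rfl
      rw [if_pos rfl]
      rw [hip32]
      nlinarith [mul_lt_mul_of_pos_left hplt (mul_pos hl2' a2)]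
  have hcos32 : Real.cos (angle v3 v2) = inner ℝ v3 v2 / (‖v3‖ * ‖v2‖) := cos_angle v3 v2
  have hcos12 : Real.cos (angle v1 v2) = inner ℝ v1 v2 / (‖v1‖ * ‖v2‖) := cos_angle v1 v2
  constructor
  · have h := key false (by simp)
    rw [if_neg (by simp)] at h
    have hc : Real.cos (angle v1 v2) ≤ Real.cos (angle v3 v2) := by
      rw [hcos12, hcos32, div_le_div_iff₀ (by positivity) (by positivity)]
      linarith
    by_contra hlt
    push_neg at hlt
    exact absurd (Real.strictAntiOn_cos hmem12 hmem32 hlt) (by linarith)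
  · intro _ hl2'
    have h := key true (fun _ => hl2')
    rw [if_pos rfl] at h
    have hc : Real.cos (angle v1 v2) < Real.cos (angle v3 v2) := by
      rw [hcos12, hcos32, div_lt_div_iff₀ (by positivity) (by positivity)]
      linarith
    by_contra hlt
    push_neg at hlt
    rcases eq_or_lt_of_le hlt with heq | hlt'
    · rw [heq] at hc; linarith
    · exact absurd (Real.strictAntiOn_cos hmem12 hmem32 hlt') (by linarith)
end

section
/- Let (V_k)_{k∈ℕ} be a nonnegative sequence satisfying V_k ≤ c·V_{k−1} + c·C·‖u_k − u_{k−1}‖ for all k ≥ 1, with c ∈ (0,1) and C > 0, where (u_k) is a sequence in R^n. Then for every T ≥ 1, ∑_{k=0}^{T−1} V_k² ≤ V_0²/(1−ρ_1) + (ρ_2/(1−ρ_1))·∑_{k=1}^{T} ‖u_k − u_{k−1}‖², where ρ_1 = (1+c²)/2 and ρ_2 = ((1+c²)/(1−c²))·c²·C². -/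
/-- Cumulative squared bound for a perturbed-contraction sequence: if V_k ≤ c·V_{k−1} +
c·C·‖u_k − u_{k−1}‖ with c ∈ (0,1), C > 0, then ∑_{k=0}^{T−1} V_k² ≤ V_0²/(1−ρ₁) +
(ρ₂/(1−ρ₁))·∑_{k=1}^{T} ‖u_k − u_{k−1}‖², with ρ₁ = (1+c²)/2 and ρ₂ = ((1+c²)/(1−c²))·(cC)². -/
theorem stmt14 {n : ℕ} (c C : ℝ) (hc0 : 0 < c) (hc1 : c < 1) (hC : 0 < C)
    (V : ℕ → ℝ) (hV : ∀ k, 0 ≤ V k)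
    (u : ℕ → EuclideanSpace ℝ (Fin n))
    (hrec : ∀ k : ℕ, 1 ≤ k → V k ≤ c * V (k - 1) + c * C * ‖u k - u (k - 1)‖)
    (T : ℕ) (hT : 1 ≤ T) :
    ∑ k ∈ Finset.range T, V k ^ 2 ≤
      V 0 ^ 2 / (1 - (1 + c ^ 2) / 2) +
        ((1 + c ^ 2) / (1 - c ^ 2) * (c * C) ^ 2) / (1 - (1 + c ^ 2) / 2) *
          ∑ k ∈ Finset.Icc 1 T, ‖u k - u (k - 1)‖ ^ 2 := by
  set ρ₁ : ℝ := (1 + c ^ 2) / 2 with hρ₁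
  set ρ₂ : ℝ := (1 + c ^ 2) / (1 - c ^ 2) * (c * C) ^ 2 with hρ₂
  set d : ℕ → ℝ := fun k => ‖u k - u (k - 1)‖ with hd
  have hc2 : c ^ 2 < 1 := by nlinarith
  have h1ρ : 0 < 1 - ρ₁ := by rw [hρ₁]; nlinarith
  have hdnn : ∀ k, 0 ≤ d k := fun k => norm_nonneg _
  -- key step inequality
  have key : ∀ k : ℕ, 1 ≤ k → V k ^ 2 ≤ ρ₁ * V (k - 1) ^ 2 + ρ₂ * d k ^ 2 := by
    intro k hk
    have h := hrec k hk
    have hVk := hV k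
    have hVk1 := hV (k - 1)
    have hdk := hdnn k
    rw [hρ₁, hρ₂]
    have h1c : 0 < 1 - c ^ 2 := by linarith
    have expand : (1 + c ^ 2) / 2 * V (k - 1) ^ 2 + (1 + c ^ 2) / (1 - c ^ 2) * (c * C) ^ 2 * d k ^ 2
        = ((1 - c ^ 2) * (1 + c ^ 2) * V (k - 1) ^ 2 + 2 * (1 + c ^ 2) * (c * C) ^ 2 * d k ^ 2) / (2 * (1 - c ^ 2)) := by
      field_simp
    rw [expand, le_div_iff₀ (by positivity)]
    nlinarith [sq_nonneg ((1 - c ^ 2) * V (k - 1) - 2 * c ^ 2 * C * d k),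
      mul_le_mul h h (hV k) (by positivity : (0:ℝ) ≤ c * V (k-1) + c * C * d k),
      sq_nonneg (V (k-1)), sq_nonneg (d k)]
  -- sum manipulation
  set S : ℝ := ∑ k ∈ Finset.range T, V k ^ 2 with hS
  set D : ℝ := ∑ k ∈ Finset.Icc 1 T, d k ^ 2 with hD
  have hsplit : S = V 0 ^ 2 + ∑ k ∈ Finset.Ico 1 T, V k ^ 2 := by
    rw [hS, Finset.range_eq_Ico, ← Finset.sum_Ico_consecutive _ (Nat.zero_le 1) hT]
    simp
  have hmid : ∑ k ∈ Finset.Ico 1 T, V k ^ 2 ≤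
      ρ₁ * ∑ k ∈ Finset.Ico 1 T, V (k - 1) ^ 2 + ρ₂ * ∑ k ∈ Finset.Ico 1 T, d k ^ 2 := by
    rw [Finset.mul_sum, Finset.mul_sum, ← Finset.sum_add_distrib]
    apply Finset.sum_le_sum
    intro k hk
    exact key k (Finset.mem_Ico.mp hk).1
  have hshift : ∑ k ∈ Finset.Ico 1 T, V (k - 1) ^ 2 ≤ S := by
    rw [Finset.sum_Ico_eq_sum_range]
    simp only [Nat.add_sub_cancel_left]
    rw [hS]
    apply Finset.sum_le_sum_of_subset_of_nonneg
    · exact Finset.range_subset_range.mpr (Nat.sub_le T 1)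
    · intro i _ _; positivity
  have hDle : ∑ k ∈ Finset.Ico 1 T, d k ^ 2 ≤ D := by
    rw [hD]
    apply Finset.sum_le_sum_of_subset_of_nonneg
    · intro x hx
      rw [Finset.mem_Ico] at hx
      exact Finset.mem_Icc.mpr ⟨hx.1, le_of_lt hx.2⟩
    · intro i _ _; positivity
  have hρ₁pos : 0 ≤ ρ₁ := by rw [hρ₁]; positivity
  have hρ₂pos : 0 ≤ ρ₂ := by
    rw [hρ₂]
    have h1c : 0 < 1 - c ^ 2 := by linarith
    positivity
  have hDnn : 0 ≤ D := by rw [hD]; apply Finset.sum_nonneg; intro i _; positivity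
  have hmain : S ≤ V 0 ^ 2 + ρ₁ * S + ρ₂ * D := by
    calc S = V 0 ^ 2 + ∑ k ∈ Finset.Ico 1 T, V k ^ 2 := hsplit
    _ ≤ V 0 ^ 2 + (ρ₁ * ∑ k ∈ Finset.Ico 1 T, V (k - 1) ^ 2 + ρ₂ * ∑ k ∈ Finset.Ico 1 T, d k ^ 2) := by linarith
    _ ≤ V 0 ^ 2 + (ρ₁ * S + ρ₂ * D) := by
        gcongr
    _ = V 0 ^ 2 + ρ₁ * S + ρ₂ * D := by ring
  have hfin : V 0 ^ 2 / (1 - ρ₁) + ρ₂ / (1 - ρ₁) * D = (V 0 ^ 2 + ρ₂ * D) / (1 - ρ₁) := by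
    field_simp
  rw [hfin, le_div_iff₀ h1ρ]
  nlinarith
end
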